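/- Let a, b, c be integers with 0 ≤ a, b < c and let d = (1−a−b) mod c. If gcd(a,c) = gcd(b,c) = gcd(d,c) = 1 and at least one of a = 1, b = 1, c = 1, d = 1 holds, then the tetrahedron T_{a,b,c} is empty. -/
import Mathlib


/-- A point of `ℝ³` is a lattice point if all of its coordinates are integers. -/
def IsLatticePt (x : Fin 3 → ℝ) : Prop := ∀ i, ∃ m : ℤ, x i = (m : ℝ)

/-- The tetrahedron `T_{a,b,c}`: the convex hull of `(0,0,0)`, `(1,0,0)`, `(0,1,0)`, `(a,b,c)`. -/
def Tet (a b c : ℤ) : Set (Fin 3 → ℝ) :=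
  convexHull ℝ {![0,0,0], ![1,0,0], ![0,1,0], ![(a : ℝ), (b : ℝ), (c : ℝ)]}

/-- `T_{a,b,c}` is an empty lattice tetrahedron: it contains no point of `ℤ³`
other than its four vertices. -/
def TetIsEmpty (a b c : ℤ) : Prop :=
  ∀ x ∈ Tet a b c, IsLatticePt x →
    x = ![0,0,0] ∨ x = ![1,0,0] ∨ x = ![0,1,0] ∨ x = ![(a : ℝ), (b : ℝ), (c : ℝ)]

lemma mem_tet {a b c : ℤ} {x : Fin 3 → ℝ} (hx : x ∈ Tet a b c) :
    ∃ t1 t2 t3 : ℝ, 0 ≤ t1 ∧ 0 ≤ t2 ∧ 0 ≤ t3 ∧ t1 + t2 + t3 ≤ 1 ∧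
      x 0 = t1 + t3 * a ∧ x 1 = t2 + t3 * b ∧ x 2 = t3 * c := by
  set K : Set (Fin 3 → ℝ) := {y | ∃ t1 t2 t3 : ℝ, 0 ≤ t1 ∧ 0 ≤ t2 ∧ 0 ≤ t3 ∧ t1 + t2 + t3 ≤ 1 ∧
      y 0 = t1 + t3 * a ∧ y 1 = t2 + t3 * b ∧ y 2 = t3 * c} with hKdef
  have hconv : Convex ℝ K := by
    intro p hp q hq α β hα hβ hαβ
    obtain ⟨p1,p2,p3,hp1,hp2,hp3,hps,he1,he2,he3⟩ := hp
    obtain ⟨q1,q2,q3,hq1,hq2,hq3,hqs,hf1,hf2,hf3⟩ := hq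
    refine ⟨α*p1+β*q1, α*p2+β*q2, α*p3+β*q3,
      add_nonneg (mul_nonneg hα hp1) (mul_nonneg hβ hq1),
      add_nonneg (mul_nonneg hα hp2) (mul_nonneg hβ hq2),
      add_nonneg (mul_nonneg hα hp3) (mul_nonneg hβ hq3), ?_, ?_, ?_, ?_⟩
    · nlinarith [mul_le_mul_of_nonneg_left hps hα, mul_le_mul_of_nonneg_left hqs hβ]
    · show α * p 0 + β * q 0 = _
      rw [he1, hf1]; ring
    · show α * p 1 + β * q 1 = _
      rw [he2, hf2]; ring
    · show α * p 2 + β * q 2 = _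
      rw [he3, hf3]; ring
  have hsub : ({![0,0,0], ![1,0,0], ![0,1,0], ![(a : ℝ), (b : ℝ), (c : ℝ)]} :
      Set (Fin 3 → ℝ)) ⊆ K := by
    rintro y hy
    simp only [Set.mem_insert_iff, Set.mem_singleton_iff] at hy
    rcases hy with rfl | rfl | rfl | rfl
    · exact ⟨0,0,0, le_refl _, le_refl _, le_refl _, by norm_num, by simp, by simp, by simp⟩
    · exact ⟨1,0,0, by norm_num, le_refl _, le_refl _, by norm_num, by simp, by simp, by simp⟩
    · exact ⟨0,1,0, le_refl _, by norm_num, le_refl _, by norm_num, by simp, by simp, by simp⟩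
    · exact ⟨0,0,1, le_refl _, le_refl _, by norm_num, by norm_num, by simp, by simp, by simp⟩
  exact convexHull_min hsub hconv hx

lemma white_key (a b c d m0 m1 m2 : ℤ) (ha : 0 ≤ a) (hac : a < c) (hb : 0 ≤ b) (hbc : b < c)
    (hd : d = (1 - a - b) % c)
    (hga : Int.gcd a c = 1) (hgb : Int.gcd b c = 1) (hgd : Int.gcd d c = 1)
    (hone : a = 1 ∨ b = 1 ∨ c = 1 ∨ d = 1)
    (h1 : 0 ≤ m2) (h2 : m2 ≤ c) (h3 : a * m2 ≤ c * m0) (h4 : b * m2 ≤ c * m1)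
    (h5 : c * m0 - a * m2 + c * m1 - b * m2 + m2 ≤ c) :
    (m0 = 0 ∧ m1 = 0 ∧ m2 = 0) ∨ (m0 = 1 ∧ m1 = 0 ∧ m2 = 0) ∨
    (m0 = 0 ∧ m1 = 1 ∧ m2 = 0) ∨ (m0 = a ∧ m1 = b ∧ m2 = c) := by
  have hc : 0 < c := lt_of_le_of_lt ha hac
  by_cases hz : m2 = 0
  · subst hz
    have hm0 : 0 ≤ m0 := le_of_mul_le_mul_left
      (show c * 0 ≤ c * m0 by rw [mul_zero]; linarith [mul_zero a]) hc
    have hm1 : 0 ≤ m1 := le_of_mul_le_mul_left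
      (show c * 0 ≤ c * m1 by rw [mul_zero]; linarith [mul_zero b]) hc
    have hs : m0 + m1 ≤ 1 := le_of_mul_le_mul_left
      (show c * (m0 + m1) ≤ c * 1 by
        rw [mul_add, mul_one]; linarith [mul_zero a, mul_zero b]) hc
    clear h3 h4 h5 hd hga hgb hgd hone
    omega
  by_cases hcc : m2 = c
  · rw [hcc] at h3 h4 h5
    have hm0 : a ≤ m0 := le_of_mul_le_mul_left
      (show c * a ≤ c * m0 by rw [mul_comm]; exact h3) hc
    have hm1 : b ≤ m1 := le_of_mul_le_mul_left
      (show c * b ≤ c * m1 by rw [mul_comm]; exact h4) hc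
    have hs : m0 + m1 ≤ a + b := le_of_mul_le_mul_left
      (show c * (m0 + m1) ≤ c * (a + b) by
        rw [mul_add, mul_add]; linarith [mul_comm a c, mul_comm b c]) hc
    clear h3 h4 h5 hd hga hgb hgd hone
    omega
  exfalso
  have hk0 : 0 < m2 := lt_of_le_of_ne h1 (fun h => hz h.symm)
  have hkc : m2 < c := lt_of_le_of_ne h2 hcc
  have hu : 0 ≤ c * m0 - a * m2 := by linarith
  have hw : 0 ≤ c * m1 - b * m2 := by linarith
  have huw : (c * m0 - a * m2) + (c * m1 - b * m2) ≤ c - m2 := by linarith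
  rcases hone with ha1 | hb1 | hc1 | hd1
  · -- a = 1
    subst ha1
    have h6 : 0 < c * m0 := by linarith
    have h7 : c * m0 ≤ c := by linarith
    have hm0pos : 0 < m0 := lt_of_mul_lt_mul_left
      (show c * 0 < c * m0 by rw [mul_zero]; exact h6) hc.le
    have hm0le : m0 ≤ 1 := le_of_mul_le_mul_left
      (show c * m0 ≤ c * 1 by rw [mul_one]; exact h7) hc
    have hm0 : m0 = 1 := le_antisymm hm0le hm0pos
    subst hm0
    have heq : b * m2 = c * m1 := le_antisymm h4 (by linarith)
    have hdvd : c ∣ b * m2 := ⟨m1, heq⟩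
    have hcop : IsCoprime (c : ℤ) b :=
      Int.isCoprime_iff_gcd_eq_one.mpr (by rw [Int.gcd_comm]; exact hgb)
    have := Int.le_of_dvd hk0 (hcop.dvd_of_dvd_mul_left hdvd)
    linarith
  · -- b = 1
    subst hb1
    have h6 : 0 < c * m1 := by linarith
    have h7 : c * m1 ≤ c := by linarith
    have hm1pos : 0 < m1 := lt_of_mul_lt_mul_left
      (show c * 0 < c * m1 by rw [mul_zero]; exact h6) hc.le
    have hm1le : m1 ≤ 1 := le_of_mul_le_mul_left
      (show c * m1 ≤ c * 1 by rw [mul_one]; exact h7) hc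
    have hm1 : m1 = 1 := le_antisymm hm1le hm1pos
    subst hm1
    have heq : a * m2 = c * m0 := le_antisymm h3 (by linarith)
    have hdvd : c ∣ a * m2 := ⟨m0, heq⟩
    have hcop : IsCoprime (c : ℤ) a :=
      Int.isCoprime_iff_gcd_eq_one.mpr (by rw [Int.gcd_comm]; exact hga)
    have := Int.le_of_dvd hk0 (hcop.dvd_of_dvd_mul_left hdvd)
    linarith
  · -- c = 1
    linarith
  · -- d = 1
    have hd1' : (1 - a - b) % c = 1 := by rw [← hd, hd1]
    have hmd := Int.emod_add_mul_ediv (1 - a - b) c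
    rw [hd1'] at hmd
    set q : ℤ := (1 - a - b) / c with hq
    have hab : a + b = c * (-q) := by linarith [mul_neg c q]
    have he0 : 0 ≤ -q := le_of_mul_le_mul_left
      (show c * 0 ≤ c * (-q) by rw [mul_zero]; linarith) hc
    have he1 : -q ≤ 1 := by
      have : -q < 2 := lt_of_mul_lt_mul_left
        (show c * (-q) < c * 2 by linarith [mul_two c, two_mul c]) hc.le
      omega
    rcases eq_or_lt_of_le he0 with h0 | h0
    · have hab0 : a + b = 0 := by rw [hab, ← h0, mul_zero]
      have ha0 : a = 0 := by linarith
      subst ha0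
      have hna : c.natAbs = 1 := by simpa using hga
      have : c = 1 := by omega
      linarith
    · have hq1 : -q = 1 := le_antisymm he1 h0
      have habc : a + b = c := by rw [hab, hq1, mul_one]
      have hsum : (c * m0 - a * m2) + (c * m1 - b * m2) = c * (m0 + m1 - m2) := by
        linear_combination (-m2) * habc
      have hs0 : 0 ≤ c * (m0 + m1 - m2) := by rw [← hsum]; linarith
      have hs1 : c * (m0 + m1 - m2) < c * 1 := by rw [← hsum, mul_one]; linarith
      have hsge : 0 ≤ m0 + m1 - m2 := le_of_mul_le_mul_left
        (show c * 0 ≤ c * (m0 + m1 - m2) by rw [mul_zero]; exact hs0) hc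
      have hslt : m0 + m1 - m2 < 1 := lt_of_mul_lt_mul_left hs1 hc.le
      have hs00 : m0 + m1 - m2 = 0 := by omega
      have hcs0 : c * (m0 + m1 - m2) = 0 := by rw [hs00, mul_zero]
      have hu0 : a * m2 = c * m0 := by linarith
      have hdvd : c ∣ a * m2 := ⟨m0, hu0⟩
      have hcop : IsCoprime (c : ℤ) a :=
        Int.isCoprime_iff_gcd_eq_one.mpr (by rw [Int.gcd_comm]; exact hga)
      have := Int.le_of_dvd hk0 (hcop.dvd_of_dvd_mul_left hdvd)
      linarith

/-- **White's theorem, sufficiency.** If `0 ≤ a, b < c`, `d = (1 - a - b) mod c`,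
`gcd(a,c) = gcd(b,c) = gcd(d,c) = 1` and at least one of `a = 1`, `b = 1`, `c = 1`, `d = 1`
holds, then the tetrahedron `T_{a,b,c}` is empty. -/
theorem stmt_1 (a b c d : ℤ) (ha : 0 ≤ a) (hac : a < c) (hb : 0 ≤ b) (hbc : b < c)
    (hd : d = (1 - a - b) % c)
    (hga : Int.gcd a c = 1) (hgb : Int.gcd b c = 1) (hgd : Int.gcd d c = 1)
    (hone : a = 1 ∨ b = 1 ∨ c = 1 ∨ d = 1) :
    TetIsEmpty a b c := by
  intro x hx hlat
  obtain ⟨t1, t2, t3, ht1, ht2, ht3, hts, he0, he1, he2⟩ := mem_tet hx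
  obtain ⟨m0, hm0⟩ := hlat 0
  obtain ⟨m1, hm1⟩ := hlat 1
  obtain ⟨m2, hm2⟩ := hlat 2
  have hc : 0 < c := lt_of_le_of_lt ha hac
  have hcR : (0 : ℝ) < (c : ℝ) := by exact_mod_cast hc
  have em0 : (m0 : ℝ) = t1 + t3 * a := by rw [← hm0, he0]
  have em1 : (m1 : ℝ) = t2 + t3 * b := by rw [← hm1, he1]
  have em2 : (m2 : ℝ) = t3 * c := by rw [← hm2, he2]
  have ht3le : t3 ≤ 1 := by linarith
  have h1 : 0 ≤ m2 := by
    have : (0 : ℝ) ≤ (m2 : ℝ) := by rw [em2]; exact mul_nonneg ht3 hcR.le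
    exact_mod_cast this
  have h2 : m2 ≤ c := by
    have : (m2 : ℝ) ≤ (c : ℝ) := by
      rw [em2]; nlinarith
    exact_mod_cast this
  have h3 : a * m2 ≤ c * m0 := by
    have : (a : ℝ) * (m2 : ℝ) ≤ (c : ℝ) * (m0 : ℝ) := by
      rw [em2, em0]; nlinarith [mul_nonneg hcR.le ht1]
    exact_mod_cast this
  have h4 : b * m2 ≤ c * m1 := by
    have : (b : ℝ) * (m2 : ℝ) ≤ (c : ℝ) * (m1 : ℝ) := by
      rw [em2, em1]; nlinarith [mul_nonneg hcR.le ht2]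
    exact_mod_cast this
  have h5 : c * m0 - a * m2 + c * m1 - b * m2 + m2 ≤ c := by
    have : (c : ℝ) * m0 - a * m2 + c * m1 - b * m2 + m2 ≤ (c : ℝ) := by
      rw [em2, em0, em1]
      nlinarith [mul_le_mul_of_nonneg_left hts hcR.le]
    exact_mod_cast this
  rcases white_key a b c d m0 m1 m2 ha hac hb hbc hd hga hgb hgd hone h1 h2 h3 h4 h5 with
    ⟨e0, e1, e2⟩ | ⟨e0, e1, e2⟩ | ⟨e0, e1, e2⟩ | ⟨e0, e1, e2⟩
  · left
    funext i
    fin_cases i <;> simp [hm0, hm1, hm2, e0, e1, e2]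
  · right; left
    funext i
    fin_cases i <;> simp [hm0, hm1, hm2, e0, e1, e2]
  · right; right; left
    funext i
    fin_cases i <;> simp [hm0, hm1, hm2, e0, e1, e2]
  · right; right; right
    funext i
    fin_cases i <;> simp [hm0, hm1, hm2, e0, e1, e2]
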